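/- Let m ≥ 2 and d ≥ 2 be integers, and let a_0(X), a_1(X), ..., a_{m-1}(X) ∈ ℚ[X] with a_0 ≠ 0 and deg a_i ≤ d - 1 for all 0 ≤ i ≤ m-1. Then the polynomial f(X,Y) = a_0(X) + a_1(X)Y + ... + a_{m-1}(X)Y^{m-1} + (X^d + 5X + 5)Y^m is irreducible as a polynomial in Y over the field ℚ(X). -/

import Mathlib

open Polynomial

lemma pmonic {S : Type*} [CommRing S] [Nontrivial S] {d : ℕ} (hd : 2 ≤ d) :
    ((X : S[X])^d + 5*X + 5).Monic := by
  have e : (X : S[X])^d + 5*X + 5 = X^d + (5*X + 5) := by ring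
  rw [e]
  apply (monic_X_pow d).add_of_left
  rw [degree_X_pow]
  have h1 : (5*X + 5 : S[X]).degree ≤ 1 := by compute_degree
  have h2 : (1 : WithBot ℕ) < d := by exact_mod_cast (by omega : 1 < d)
  exact lt_of_le_of_lt h1 h2

lemma pdeg {S : Type*} [CommRing S] [Nontrivial S] {d : ℕ} (hd : 2 ≤ d) :
    ((X : S[X])^d + 5*X + 5).natDegree = d := by
  compute_degree! <;> (try simp [show d ≠ 1 by omega, show d ≠ 0 by omega]) <;> omega

lemma pcoeff {S : Type*} [CommRing S] {d n : ℕ} (hd : 2 ≤ d) (hn : n < d) :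
    ((X : S[X])^d + 5*X + 5).coeff n = if n = 0 then 5 else if n = 1 then 5 else 0 := by
  have h5 : (5 : S[X]) = C 5 := (map_ofNat C 5).symm
  rw [h5]
  match n with
  | 0 => simp [coeff_X_pow]; omega
  | 1 => simp [coeff_X_pow, coeff_C_mul]; omega
  | (k+2) =>
    simp [coeff_X_pow, coeff_C_mul, coeff_X, coeff_C, Nat.ne_of_lt hn]

lemma pZ_irred {d : ℕ} (hd : 2 ≤ d) : Irreducible ((X : ℤ[X])^d + 5*X + 5) := by
  set P : ℤ[X] := X^d + 5*X + 5 with hP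
  have hmon : P.Monic := pmonic hd
  have hdeg : P.natDegree = d := pdeg hd
  have hprime : (Ideal.span {(5:ℤ)}).IsPrime := by
    rw [Ideal.span_singleton_prime (by norm_num)]
    norm_num
  refine (hmon.isEisensteinAt_of_mem_of_notMem ?_ ?_ ?_).irreducible hprime hmon.isPrimitive ?_
  · exact hprime.ne_top
  · intro n hn
    rw [hdeg] at hn
    rw [hP, pcoeff hd hn]
    split_ifs <;> simp [Ideal.mem_span_singleton]
  · rw [hP, pcoeff hd (by omega)]
    simp only [if_pos rfl, Ideal.span_singleton_pow, Ideal.mem_span_singleton]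
    norm_num
  · omega

lemma phi_coeff (m : ℕ) (u : Polynomial (Polynomial ℚ)) (hu : u.natDegree ≤ m)
    (e j : ℕ) (hj : j ≤ m) :
    (eval₂ (expand ℚ (m+1)).toRingHom X u).coeff ((m+1)*e + j) = (u.coeff j).coeff e := by
  set w := m + 1 with hw
  have hw0 : 0 < w := Nat.succ_pos m
  rw [eval₂_eq_sum_range, finset_sum_coeff]
  rw [Finset.sum_eq_single j]
  · rw [AlgHom.toRingHom_eq_coe, RingHom.coe_coe, coeff_mul_X_pow',
      if_pos (by omega : j ≤ w*e + j), Nat.add_sub_cancel, coeff_expand hw0,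
      if_pos (Dvd.intro e rfl), Nat.mul_div_cancel_left e hw0]
  · intro i hi hij
    simp only [Finset.mem_range] at hi
    have him : i ≤ m := by omega
    rw [AlgHom.toRingHom_eq_coe, RingHom.coe_coe, coeff_mul_X_pow']
    split_ifs with hle
    · rw [coeff_expand hw0, if_neg]
      intro hdvd
      rcases le_or_gt i j with hij2 | hij2
      · have : w*e + j - i = w*e + (j - i) := by omega
        rw [this] at hdvd
        have : w ∣ (j - i) := (Nat.dvd_add_right ⟨e, rfl⟩).mp hdvd
        have := Nat.eq_zero_of_dvd_of_lt this (by omega)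
        omega
      · have he : 1 ≤ e := by
          rcases Nat.eq_zero_or_pos e with rfl | h1
          · rw [mul_zero] at hle; omega
          · exact h1
        have : w*e + j - i = w*(e-1) + (w + j - i) := by
          have : w*e = w*(e-1) + w := by
            have : e - 1 + 1 = e := by omega
            nlinarith [this]
          omega
        rw [this] at hdvd
        have : w ∣ (w + j - i) := (Nat.dvd_add_right ⟨e-1, rfl⟩).mp hdvd
        have := Nat.eq_zero_of_dvd_of_lt this (by omega)
        omega
    · rfl
  · intro hj2
    simp only [Finset.mem_range, not_lt] at hj2
    simp [coeff_eq_zero_of_natDegree_lt (show u.natDegree < j by omega)]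

theorem stmt8 (m d : ℕ) (hm : 2 ≤ m) (hd : 2 ≤ d)
    (a : ℕ → Polynomial ℚ) (ha0 : a 0 ≠ 0)
    (hdeg : ∀ i ≤ m - 1, (a i).natDegree ≤ d - 1)
    (f : Polynomial (Polynomial ℚ))
    (hf : f = (∑ i ∈ Finset.range m, Polynomial.C (a i) * Polynomial.X ^ i)
        + Polynomial.C ((Polynomial.X : Polynomial ℚ) ^ d + 5 * Polynomial.X + 5)
            * Polynomial.X ^ m) :
    Irreducible (f.map (algebraMap (Polynomial ℚ) (RatFunc ℚ))) := by
  set p : Polynomial ℚ := X^d + 5*X + 5 with hp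
  have hp_irr : Irreducible p := by
    have h1 := pZ_irred hd
    have h2 := (Polynomial.IsPrimitive.Int.irreducible_iff_irreducible_map_cast
      (pmonic (S:=ℤ) hd).isPrimitive).mp h1
    have h3 : ((X:ℤ[X])^d + 5*X+5).map (Int.castRingHom ℚ) = p := by
      rw [hp]
      simp [Polynomial.map_add, Polynomial.map_pow, Polynomial.map_mul, Polynomial.map_ofNat]
    rwa [h3] at h2
  have hpm : p.Monic := pmonic hd
  have hpd : p.natDegree = d := pdeg hd
  have hp0 : p ≠ 0 := hpm.ne_zero
  have hpcd : p.coeff d = 1 := by rw [← hpd]; exact hpm.coeff_natDegree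
  -- coefficients of f
  have hfc : ∀ j, f.coeff j = if j < m then a j else if j = m then p else 0 := by
    intro j
    rw [hf]
    simp only [coeff_add, finset_sum_coeff, coeff_C_mul, coeff_X_pow, mul_ite, mul_one, mul_zero,
      Finset.sum_ite_eq, Finset.mem_range]
    split_ifs <;> first | omega | simp_all
  have hfm : f.coeff m = p := by rw [hfc m]; simp
  have hdegf : f.natDegree = m := by
    apply le_antisymm
    · rw [natDegree_le_iff_coeff_eq_zero]
      intro N hN
      rw [hfc N, if_neg (by omega), if_neg (by omega)]
    · exact le_natDegree_of_ne_zero (by rw [hfm]; exact hp0)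
  have hf0 : f ≠ 0 := fun h0 => hp0 (by rw [← hfm, h0, coeff_zero])
  have hlead : f.leadingCoeff = p := by rw [leadingCoeff, hdegf, hfm]
  -- f primitive
  have hprim : f.IsPrimitive := by
    intro r hr
    rw [C_dvd_iff_dvd_coeff] at hr
    have h1 : r ∣ p := by have := hr m; rwa [hfm] at this
    have h2 : r ∣ a 0 := by have := hr 0; rwa [hfc 0, if_pos (by omega)] at this
    obtain ⟨t, ht⟩ := h1
    rcases hp_irr.isUnit_or_isUnit ht with h | h
    · exact h
    · exfalso
      have hass : Associated p r := by
        rw [ht]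
        exact associated_mul_unit_left r t h
      have hpr : p ∣ a 0 := dvd_trans hass.dvd h2
      have hle := natDegree_le_of_dvd hpr ha0
      have h00 := hdeg 0 (by omega)
      omega
  -- key lemma
  have key : ∀ g h : Polynomial (Polynomial ℚ), f = g * h →
      IsUnit h.leadingCoeff → IsUnit g ∨ IsUnit h := by
    intro g h hgh hu
    by_cases hh0 : h.natDegree = 0
    · right
      rw [eq_C_of_natDegree_eq_zero hh0]
      rw [leadingCoeff, hh0] at hu
      exact isUnit_C.mpr hu
    by_cases hg0 : g.natDegree = 0
    · left
      have hdvd : C (g.coeff 0) ∣ f := ⟨h, by rw [hgh, ← eq_C_of_natDegree_eq_zero hg0]⟩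
      rw [eq_C_of_natDegree_eq_zero hg0]
      exact isUnit_C.mpr (hprim _ hdvd)
    exfalso
    have hgne : g ≠ 0 := fun h' => hf0 (by rw [hgh, h', zero_mul])
    have hhne : h ≠ 0 := fun h' => hf0 (by rw [hgh, h', mul_zero])
    have hkr : g.natDegree + h.natDegree = m := by rw [← hdegf, hgh, natDegree_mul hgne hhne]
    obtain ⟨c, hcu, hcC⟩ := Polynomial.isUnit_iff.mp hu
    have hc0 : c ≠ 0 := hcu.ne_zero
    have hsplit : g.leadingCoeff * h.leadingCoeff = p := by
      rw [← leadingCoeff_mul, ← hgh, hlead]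
    have hgld : g.leadingCoeff.coeff d * c = 1 := by
      have : (g.leadingCoeff * h.leadingCoeff).coeff d = 1 := by rw [hsplit, hpcd]
      rwa [← hcC, coeff_mul_C] at this
    have hgld0 : g.leadingCoeff.coeff d ≠ 0 := fun h' => by simp [h'] at hgld
    set Φ : Polynomial (Polynomial ℚ) →+* Polynomial ℚ :=
      eval₂RingHom (expand ℚ (m+1)).toRingHom X with hΦ
    have EK : ∀ u, Φ u = eval₂ (expand ℚ (m+1)).toRingHom X u := fun u => rfl
    have hφmul : Φ f = Φ g * Φ h := by rw [hgh, map_mul]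
    have hφg : (Φ g).coeff ((m+1)*d + g.natDegree) ≠ 0 := by
      rw [EK, phi_coeff m g (by omega) d g.natDegree (by omega), coeff_natDegree]
      exact hgld0
    have hφgne : Φ g ≠ 0 := fun h' => hφg (by rw [h', coeff_zero])
    have hφgdeg : (m+1)*d + g.natDegree ≤ (Φ g).natDegree := le_natDegree_of_ne_zero hφg
    have hφh : (Φ h).coeff h.natDegree ≠ 0 := by
      have h1 := phi_coeff m h (by omega) 0 h.natDegree (by omega)
      rw [mul_zero, zero_add] at h1
      rw [EK, h1, coeff_natDegree, ← hcC, coeff_C]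
      simpa using hc0
    have hφhne : Φ h ≠ 0 := fun h' => hφh (by rw [h', coeff_zero])
    have hφfdeg : (Φ f).natDegree ≤ (m+1)*d + m := by
      rw [EK]
      rw [eval₂_eq_sum_range]
      apply natDegree_sum_le_of_forall_le
      intro i hi
      simp only [Finset.mem_range] at hi
      apply le_trans (natDegree_mul_le)
      have h2 : (f.coeff i).natDegree ≤ d := by
        rw [hfc i]
        split_ifs with h3 h4
        · exact le_trans (hdeg i (by omega)) (by omega)
        · rw [hpd]
        · simp
      have h1 : ((expand ℚ (m+1)).toRingHom (f.coeff i)).natDegree ≤ (m+1) * d := by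
        rw [AlgHom.toRingHom_eq_coe, RingHom.coe_coe, natDegree_expand]
        calc (f.coeff i).natDegree * (m+1) ≤ d * (m+1) := Nat.mul_le_mul_right _ h2
          _ = (m+1) * d := Nat.mul_comm _ _
      rw [natDegree_X_pow]
      rw [hdegf] at hi
      omega
    have hmd : (Φ f).natDegree = (Φ g).natDegree + (Φ h).natDegree := by
      rw [hφmul]
      exact natDegree_mul hφgne hφhne
    have hφhdeg : (Φ h).natDegree ≤ h.natDegree := by omega
    have hconst : ∀ j, h.coeff j = C ((h.coeff j).coeff 0) := by
      intro j
      rcases le_or_gt j h.natDegree with hjr | hjr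
      · apply eq_C_of_natDegree_le_zero
        rw [natDegree_le_iff_coeff_eq_zero]
        intro e he
        have h5 := phi_coeff m h (by omega) e j (by omega)
        rw [← h5, ← EK]
        apply coeff_eq_zero_of_natDegree_lt
        have h6 : (m+1) ≤ (m+1) * e := Nat.le_mul_of_pos_right (m+1) (by omega)
        omega
      · rw [coeff_eq_zero_of_natDegree_lt hjr]
        simp
    set q : Polynomial ℚ := h.map (evalRingHom 0) with hqdef
    have hqc : ∀ t, q.coeff t = (h.coeff t).coeff 0 := by
      intro t
      rw [hqdef, coeff_map, coeff_zero_eq_eval_zero]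
      rfl
    have hqmap : h = q.map C := by
      ext j
      rw [coeff_map, hqc j, ← hconst j]
    set G : Polynomial ℚ := ∑ s ∈ Finset.range (g.natDegree + 1), C ((g.coeff s).coeff d) * X^s
      with hG
    have hGc : ∀ s, G.coeff s = (g.coeff s).coeff d := by
      intro s
      rw [hG, finset_sum_coeff]
      simp only [coeff_C_mul, coeff_X_pow, mul_ite, mul_one, mul_zero, Finset.sum_ite_eq,
        Finset.mem_range]
      split_ifs with h1
      · rfl
      · rw [coeff_eq_zero_of_natDegree_lt (show g.natDegree < s by omega), coeff_zero]
    have hXm : (X : Polynomial ℚ)^m = G * q := by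
      ext j
      rw [coeff_mul]
      have hfj : (f.coeff j).coeff d
          = ∑ x ∈ Finset.HasAntidiagonal.antidiagonal j, G.coeff x.1 * q.coeff x.2 := by
        rw [hgh, coeff_mul, finset_sum_coeff]
        apply Finset.sum_congr rfl
        intro x _
        rw [hGc x.1, hqc x.2]
        conv_lhs => rw [hconst x.2]
        rw [coeff_mul_C]
      rw [← hfj, hfc j, coeff_X_pow]
      by_cases h1 : j < m
      · rw [if_neg (by omega), if_pos h1]
        exact (coeff_eq_zero_of_natDegree_lt (lt_of_le_of_lt (hdeg j (by omega)) (by omega))).symm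
      · by_cases h2 : j = m
        · rw [if_pos h2, if_neg (by omega), if_pos h2, hpcd]
        · rw [if_neg h2, if_neg (by omega), if_neg h2, coeff_zero]
    have hqdvd : q ∣ (X : Polynomial ℚ)^m := ⟨G, by rw [hXm, mul_comm]⟩
    obtain ⟨i, hile, hass⟩ := (dvd_prime_pow prime_X m).mp hqdvd
    have hqne : ¬ IsUnit q := by
      intro hunit
      have h1 : q.coeff h.natDegree ≠ 0 := by
        rw [hqc h.natDegree, coeff_natDegree, ← hcC, coeff_C]
        simpa using hc0
      have h2 := natDegree_eq_zero_of_isUnit hunit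
      have h3 := le_natDegree_of_ne_zero h1
      omega
    have hi0 : i ≠ 0 := by
      rintro rfl
      exact hqne (hass.symm.isUnit (by rw [pow_zero]; exact isUnit_one))
    have hXdvd : (X : Polynomial ℚ) ∣ q := dvd_trans (dvd_pow_self X hi0) hass.symm.dvd
    rw [X_dvd_iff] at hXdvd
    have hh00 : h.coeff 0 = 0 := by rw [hconst 0, ← hqc 0, hXdvd, map_zero]
    have : a 0 = 0 := by
      have h1 : f.coeff 0 = a 0 := by rw [hfc 0, if_pos (by omega)]
      rw [← h1, hgh, mul_coeff_zero, hh00, mul_zero]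
    exact ha0 this
  have hirr : Irreducible f := by
    constructor
    · intro hu
      have := natDegree_eq_zero_of_isUnit hu
      omega
    · intro g h hgh
      have hsplit : p = g.leadingCoeff * h.leadingCoeff := by
        rw [← hlead, hgh, leadingCoeff_mul]
      rcases hp_irr.isUnit_or_isUnit hsplit with h1 | h1
      · exact (key h g (by rw [hgh, mul_comm]) h1).symm
      · exact key g h hgh h1
  exact (hprim.irreducible_iff_irreducible_map_fraction_map (K := RatFunc ℚ)).mp hirr
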